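/- If a graph G on n vertices has a redundant locating-dominating set of cardinality at most k, then n ≤ 2^{k-1} + k - 2. -/

import Mathlib

open scoped symmDiff

/-- A locating-dominating (LD) set: every non-detector is dominated, and
distinct non-detectors have distinct neighborhood traces on `S`. -/
def IsLDSet {V : Type*} (G : SimpleGraph V) (S : Set V) : Prop :=
  (∀ v ∉ S, (G.neighborSet v ∩ S).Nonempty) ∧
    ∀ u ∉ S, ∀ v ∉ S, u ≠ v → G.neighborSet u ∩ S ≠ G.neighborSet v ∩ S

/-- A redundant locating-dominating (RED:LD) set. -/
def IsRedLDSet {V : Type*} (G : SimpleGraph V) (S : Set V) : Prop :=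
  IsLDSet G S ∧ ∀ v ∈ S, IsLDSet G (S \ {v})

/-- A leaf is a vertex of degree 1. -/
def IsLeaf {V : Type*} (G : SimpleGraph V) (v : V) : Prop :=
  (G.neighborSet v).ncard = 1

/-- A support vertex is a vertex adjacent to a leaf. -/
def IsSupport {V : Type*} (G : SimpleGraph V) (v : V) : Prop :=
  ∃ u, G.Adj v u ∧ IsLeaf G u

lemma ld_card_bound {V : Type*} [Fintype V] (G : SimpleGraph V) (S : Set V)
    (h : IsLDSet G S) : Fintype.card V + 1 ≤ 2 ^ S.ncard + S.ncard := by
  classical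
  set s : Finset V := S.toFinset with hsdef
  have hcoe : (s : Set V) = S := by simp [hsdef]
  have hs : S.ncard = s.card := by
    rw [← hcoe]; simp
  have hmap : ∀ v ∈ sᶜ, (G.neighborFinset v ∩ s) ∈ s.powerset.erase ∅ := by
    intro v hv
    have hv' : v ∉ S := by
      simpa [hsdef] using Finset.mem_compl.mp hv
    have hne : (G.neighborSet v ∩ S).Nonempty := h.1 v hv'
    have hcast : ((G.neighborFinset v ∩ s : Finset V) : Set V) = G.neighborSet v ∩ S := by
      simp [SimpleGraph.neighborFinset, hcoe]
    rw [Finset.mem_erase]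
    constructor
    · intro hcontra
      rw [hcontra] at hcast
      simp at hcast
      exact hne.ne_empty hcast.symm
    · exact Finset.mem_powerset.mpr Finset.inter_subset_right
  have hinj : Set.InjOn (fun v => G.neighborFinset v ∩ s) ↑sᶜ := by
    intro u hu v hv huv
    by_contra hne
    have hu' : u ∉ S := by simpa [hsdef] using Finset.mem_compl.mp hu
    have hv' : v ∉ S := by simpa [hsdef] using Finset.mem_compl.mp hv
    apply h.2 u hu' v hv' hne
    have hcast := congrArg (fun t : Finset V => (t : Set V)) huv
    simpa [SimpleGraph.neighborFinset, hcoe] using hcast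
  have hcard := Finset.card_le_card_of_injOn _ hmap hinj
  have herase : (s.powerset.erase ∅).card = 2 ^ s.card - 1 := by
    rw [Finset.card_erase_of_mem (Finset.empty_mem_powerset s), Finset.card_powerset]
  have hcompl : sᶜ.card = Fintype.card V - s.card := by
    simp [Finset.card_compl]
  have hle : s.card ≤ Fintype.card V := Finset.card_le_univ s
  have hpos : 0 < 2 ^ s.card := Nat.pow_pos (by norm_num)
  rw [herase, hcompl] at hcard
  rw [hs]
  omega

theorem stmt5 {V : Type*} [Fintype V] (G : SimpleGraph V) (S : Set V) (k : ℕ)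
    (hS : IsRedLDSet G S) (hk : S.ncard ≤ k) :
    Fintype.card V ≤ 2 ^ (k - 1) + k - 2 := by
  rcases S.eq_empty_or_nonempty with hE | ⟨v, hv⟩
  · -- S empty forces V empty
    have : Fintype.card V = 0 := by
      by_contra h0
      obtain ⟨x⟩ := Fintype.card_pos_iff.mp (Nat.pos_of_ne_zero h0)
      have hx : x ∉ S := by simp [hE]
      have := hS.1.1 x hx
      rw [hE] at this
      simp at this
    omega
  · have hSfin : S.Finite := S.toFinite
    have hpos : 0 < S.ncard := Set.ncard_pos hSfin |>.mpr ⟨v, hv⟩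
    have hld := hS.2 v hv
    have hbound := ld_card_bound G (S \ {v}) hld
    have hnd : (S \ {v}).ncard = S.ncard - 1 :=
      Set.ncard_diff_singleton_of_mem hv
    rw [hnd] at hbound
    have hk1 : 1 ≤ k := le_trans hpos hk
    have hmle : S.ncard - 1 ≤ k - 1 := by omega
    have hple : 2 ^ (S.ncard - 1) ≤ 2 ^ (k - 1) :=
      Nat.pow_le_pow_right (by norm_num) hmle
    omega
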